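/- Suppose constants r₁, r₂ ∈ (0,1) and ω ∈ ℝ satisfy ω·r₁ = α·Ω₀·r₁ - γ·Φ·(r₁+r₂) and ω·r₂ = -β·Ω₀·r₂ + γ·Φ·(r₁+r₂), where α = 1/(1-r₁²), β = 1/(1-r₂²), γ = 1/(2(r₁+r₂)²). Then z₁(t) = r₁e^{iωt}, z₂(t) = -r₂e^{iωt} is an exact solution of the vortex dipole equations. -/

import Mathlib

/-- if `r₁, r₂ ∈ (0,1)` and `ω` satisfy the guiding-center
algebraic equations `ω r₁ = α Ω₀ r₁ - γ Φ (r₁+r₂)` and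
`ω r₂ = -β Ω₀ r₂ + γ Φ (r₁+r₂)` with `α = 1/(1-r₁²)`, `β = 1/(1-r₂²)`,
`γ = 1/(2(r₁+r₂)²)`, then `z₁(t) = r₁ e^{iωt}`, `z₂(t) = -r₂ e^{iωt}` is an exact
solution of the vortex dipole equations. -/
theorem guiding_center_exact_solution
    (Ω₀ Φ : ℝ) (hΩ₀ : 0 < Ω₀) (hΦ : 0 < Φ)
    (r₁ r₂ ω : ℝ)
    (hr₁ : 0 < r₁) (hr₁' : r₁ < 1) (hr₂ : 0 < r₂) (hr₂' : r₂ < 1)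
    (heq1 : ω * r₁ = (1 / (1 - r₁ ^ 2)) * Ω₀ * r₁
      - (1 / (2 * (r₁ + r₂) ^ 2)) * Φ * (r₁ + r₂))
    (heq2 : ω * r₂ = -(1 / (1 - r₂ ^ 2)) * Ω₀ * r₂
      + (1 / (2 * (r₁ + r₂) ^ 2)) * Φ * (r₁ + r₂))
    (z₁ z₂ : ℝ → ℂ)
    (hz₁ : z₁ = fun t : ℝ => (r₁ : ℂ) * Complex.exp (Complex.I * (ω : ℂ) * (t : ℂ)))
    (hz₂ : z₂ = fun t : ℝ => -(r₂ : ℂ) * Complex.exp (Complex.I * (ω : ℂ) * (t : ℂ))) :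
    (∀ t : ℝ, ∃ w : ℂ, HasDerivAt z₁ w t ∧
      Complex.I * w
        = -((Ω₀ / (1 - ‖z₁ t‖ ^ 2) : ℝ) : ℂ) * z₁ t
          + ((Φ / (2 * ‖z₁ t - z₂ t‖ ^ 2) : ℝ) : ℂ) * (z₁ t - z₂ t)) ∧
    (∀ t : ℝ, ∃ w : ℂ, HasDerivAt z₂ w t ∧
      Complex.I * w
        = ((Ω₀ / (1 - ‖z₂ t‖ ^ 2) : ℝ) : ℂ) * z₂ t
          - ((Φ / (2 * ‖z₁ t - z₂ t‖ ^ 2) : ℝ) : ℂ) * (z₂ t - z₁ t)) := by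
  subst hz₁ hz₂
  have hexp : ∀ t : ℝ, HasDerivAt (fun t : ℝ => Complex.exp (Complex.I * (ω : ℂ) * (t : ℂ)))
      (Complex.I * ω * Complex.exp (Complex.I * (ω : ℂ) * (t : ℂ))) t := by
    intro t
    have h1 : HasDerivAt (fun t : ℝ => (t : ℂ)) 1 t := Complex.ofRealCLM.hasDerivAt
    have h2 := (h1.const_mul (Complex.I * (ω : ℂ))).cexp
    simpa [mul_comm] using h2
  have hnorm : ∀ t : ℝ, ‖Complex.exp (Complex.I * (ω : ℂ) * (t : ℂ))‖ = 1 := by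
    intro t
    rw [Complex.norm_exp]
    simp [Complex.mul_re]
  have hsum : 0 < r₁ + r₂ := by linarith
  have hd : ∀ t : ℝ, ‖(r₁ : ℂ) * Complex.exp (Complex.I * (ω : ℂ) * (t : ℂ))
      - -(r₂ : ℂ) * Complex.exp (Complex.I * (ω : ℂ) * (t : ℂ))‖ = r₁ + r₂ := by
    intro t
    have : (r₁ : ℂ) * Complex.exp (Complex.I * (ω : ℂ) * (t : ℂ))
        - -(r₂ : ℂ) * Complex.exp (Complex.I * (ω : ℂ) * (t : ℂ))
        = ((r₁ + r₂ : ℝ) : ℂ) * Complex.exp (Complex.I * (ω : ℂ) * (t : ℂ)) := by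
      push_cast; ring
    rw [this, norm_mul, hnorm, Complex.norm_real, Real.norm_of_nonneg hsum.le, mul_one]
  constructor
  · intro t
    refine ⟨(r₁ : ℂ) * (Complex.I * ω * Complex.exp (Complex.I * (ω : ℂ) * (t : ℂ))),
      ((hexp t).const_mul _), ?_⟩
    simp only [hd t]
    have hn1 : ‖(r₁ : ℂ) * Complex.exp (Complex.I * (ω : ℂ) * (t : ℂ))‖ = r₁ := by
      rw [norm_mul, hnorm, Complex.norm_real, Real.norm_of_nonneg hr₁.le, mul_one]
    rw [hn1]
    set e := Complex.exp (Complex.I * (ω : ℂ) * (t : ℂ))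
    have hI : Complex.I * ((r₁ : ℂ) * (Complex.I * ω * e)) = -((ω * r₁ : ℝ) : ℂ) * e := by
      push_cast
      rw [show Complex.I * ((r₁ : ℂ) * (Complex.I * ω * e))
          = (Complex.I * Complex.I) * (r₁ * ω * e) by ring, Complex.I_mul_I]
      ring
    rw [hI, heq1]
    have h12 : (r₁ : ℂ) * e - -(r₂ : ℂ) * e = ((r₁ + r₂ : ℝ) : ℂ) * e := by push_cast; ring
    rw [h12]
    push_cast
    ring
  · intro t
    refine ⟨-(r₂ : ℂ) * (Complex.I * ω * Complex.exp (Complex.I * (ω : ℂ) * (t : ℂ))),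
      ((hexp t).const_mul _), ?_⟩
    simp only [hd t]
    have hn2 : ‖-(r₂ : ℂ) * Complex.exp (Complex.I * (ω : ℂ) * (t : ℂ))‖ = r₂ := by
      rw [norm_mul, hnorm, norm_neg, Complex.norm_real, Real.norm_of_nonneg hr₂.le, mul_one]
    rw [hn2]
    set e := Complex.exp (Complex.I * (ω : ℂ) * (t : ℂ))
    have hI : Complex.I * (-(r₂ : ℂ) * (Complex.I * ω * e)) = ((ω * r₂ : ℝ) : ℂ) * e := by
      push_cast
      rw [show Complex.I * (-(r₂ : ℂ) * (Complex.I * ω * e))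
          = (Complex.I * Complex.I) * (-(r₂ : ℂ) * ω * e) by ring, Complex.I_mul_I]
      ring
    rw [hI, heq2]
    have h21 : -(r₂ : ℂ) * e - (r₁ : ℂ) * e = -((r₁ + r₂ : ℝ) : ℂ) * e := by push_cast; ring
    rw [h21]
    push_cast
    ring
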